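/- Let ℓ ≥ 2 and g ≥ 3 be integers with g ≤ 2ℓ² − 2. Then the integer Σ_{d | ℓ} μ(ℓ/d) · C(2d² − 2, g), where the sum runs over the positive divisors d of ℓ, is strictly positive. -/

import Mathlib

open ArithmeticFunction
open scoped ArithmeticFunction.Moebius

lemma descFac_mul_le (k m g : ℕ) :
    k ^ g * Nat.descFactorial m g ≤ Nat.descFactorial (k * m) g := by
  induction g with
  | zero => simp
  | succ g ih =>
    rw [Nat.descFactorial_succ, Nat.descFactorial_succ, pow_succ]
    rcases Nat.eq_zero_or_pos k with hk | hk
    · simp [hk]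
    calc k ^ g * k * ((m - g) * Nat.descFactorial m g)
        = (k * (m - g)) * (k ^ g * Nat.descFactorial m g) := by ring
      _ ≤ (k * m - g) * Nat.descFactorial (k * m) g := by
          apply Nat.mul_le_mul _ ih
          rcases le_or_gt m g with h | h
          · simp [Nat.sub_eq_zero_of_le h]
          · have h1 : k * (m - g) + k * g = k * m := by
              rw [← Nat.mul_add, Nat.sub_add_cancel h.le]
            have h2 : g ≤ k * g := Nat.le_mul_of_pos_left g hk
            omega

lemma choose_mul_le (k m g : ℕ) :
    k ^ g * Nat.choose m g ≤ Nat.choose (k * m) g := by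
  have h := descFac_mul_le k m g
  rw [Nat.descFactorial_eq_factorial_mul_choose, Nat.descFactorial_eq_factorial_mul_choose] at h
  have := Nat.factorial_pos g
  calc k ^ g * Nat.choose m g
      ≤ k ^ g * Nat.choose m g := le_refl _
    _ ≤ Nat.choose (k * m) g := by
        have h2 : g.factorial * (k ^ g * Nat.choose m g) ≤ g.factorial * Nat.choose (k * m) g := by
          calc g.factorial * (k ^ g * Nat.choose m g)
              = k ^ g * (g.factorial * Nat.choose m g) := by ring
            _ ≤ g.factorial * Nat.choose (k * m) g := h
        exact Nat.le_of_mul_le_mul_left h2 this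

/-- telescoping -/
lemma telescope (n : ℕ) :
    ∑ s ∈ Finset.Icc 2 (n + 1), ((s : ℚ) * (s - 1))⁻¹ = 1 - 1 / (n + 1) := by
  induction n with
  | zero => simp
  | succ n ih =>
    rw [show n + 1 + 1 = (n + 2) from rfl, Finset.sum_Icc_succ_top (by omega), ih]
    have h1 : ((n : ℚ) + 1) ≠ 0 := by positivity
    have h2 : ((n : ℚ) + 2) ≠ 0 := by positivity
    push_cast
    field_simp
    ring

/-- For integers `ℓ ≥ 2` and `g ≥ 3` with `g ≤ 2ℓ² − 2`, the integer
`Σ_{d | ℓ} μ(ℓ/d) · C(2d² − 2, g)` is strictly positive. -/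
theorem moebius_sum_pos (ℓ g : ℕ) (hℓ : 2 ≤ ℓ) (hg : 3 ≤ g) (hgℓ : g ≤ 2 * ℓ ^ 2 - 2) :
    0 < ∑ d ∈ ℓ.divisors, (μ (ℓ / d) : ℤ) * (Nat.choose (2 * d ^ 2 - 2) g : ℤ) := by
  have hℓ0 : ℓ ≠ 0 := by omega
  set N := 2 * ℓ ^ 2 - 2 with hN
  -- reindex
  have hre : ∑ d ∈ ℓ.divisors, (μ (ℓ / d) : ℤ) * (Nat.choose (2 * d ^ 2 - 2) g : ℤ)
      = ∑ s ∈ ℓ.divisors, (μ s : ℤ) * (Nat.choose (2 * (ℓ / s) ^ 2 - 2) g : ℤ) := by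
    rw [← Nat.sum_div_divisors ℓ (fun s => (μ s : ℤ) * (Nat.choose (2 * (ℓ / s) ^ 2 - 2) g : ℤ))]
    apply Finset.sum_congr rfl
    intro d hd
    rw [Nat.div_div_self (Nat.mem_divisors.mp hd).1 hℓ0]
  rw [hre]
  have h1mem : 1 ∈ ℓ.divisors := Nat.one_mem_divisors.mpr hℓ0
  rw [← Finset.add_sum_erase _ _ h1mem]
  have hμ1 : (μ 1 : ℤ) = 1 := by simp
  have hNpos : 0 < Nat.choose N g := Nat.choose_pos hgℓ
  -- key bound per term
  have key : ∀ s ∈ (ℓ.divisors).erase 1,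
      (Nat.choose (2 * (ℓ / s) ^ 2 - 2) g : ℚ)
        ≤ (Nat.choose N g : ℚ) * (32 * (s : ℚ) * (s - 1))⁻¹ := by
    intro s hs
    obtain ⟨hs1, hsd⟩ := Finset.mem_erase.mp hs
    obtain ⟨hdvd, -⟩ := Nat.mem_divisors.mp hsd
    have hs2 : 2 ≤ s := by
      have := Nat.pos_of_dvd_of_pos hdvd (by omega : 0 < ℓ)
      omega
    set d := ℓ / s with hd
    have hsd' : s * d = ℓ := Nat.mul_div_cancel' hdvd
    -- nat inequality: 32 * s * (s-1) * choose ≤ s^6 * choose ≤ s^(2g) * choose ≤ choose N g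
    have hb1 : s ^ 2 * (2 * d ^ 2 - 2) ≤ N := by
      have hd1 : 1 ≤ d := Nat.div_pos (Nat.le_of_dvd (by omega) hdvd) (by omega)
      have h2d : 2 ≤ 2 * d ^ 2 := by nlinarith
      have hss : 2 ≤ s ^ 2 * 2 := by nlinarith
      have e1 : s ^ 2 * (2 * d ^ 2 - 2) + s ^ 2 * 2 = 2 * ℓ ^ 2 := by
        rw [← Nat.mul_add, Nat.sub_add_cancel h2d, ← hsd']; ring
      rw [hN]
      refine Nat.le_sub_of_add_le ?_
      omega
    have hstep : s ^ (2 * g) * Nat.choose (2 * d ^ 2 - 2) g ≤ Nat.choose N g := by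
      calc s ^ (2 * g) * Nat.choose (2 * d ^ 2 - 2) g
          = (s ^ 2) ^ g * Nat.choose (2 * d ^ 2 - 2) g := by rw [← pow_mul]
        _ ≤ Nat.choose (s ^ 2 * (2 * d ^ 2 - 2)) g := choose_mul_le _ _ _
        _ ≤ Nat.choose N g := Nat.choose_le_choose g hb1
    have hpow : 32 * s * (s - 1) ≤ s ^ (2 * g) := by
      have h6 : s ^ 6 ≤ s ^ (2 * g) := Nat.pow_le_pow_right (by omega) (by omega)
      refine le_trans ?_ h6
      rcases Nat.lt_or_ge s 3 with h | h
      · interval_cases s <;> norm_num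
      · have : 32 * s * (s - 1) ≤ 32 * s * s := by
          apply Nat.mul_le_mul_left; omega
        refine le_trans this ?_
        calc 32 * s * s ≤ (s^2 * s^2) * s * s := by
              have h9 : 9 ≤ s ^ 2 := by nlinarith
              have : 32 ≤ s ^ 2 * s ^ 2 :=
                le_trans (by norm_num) (Nat.mul_le_mul h9 h9)
              exact Nat.mul_le_mul_right _ (Nat.mul_le_mul_right _ this)
          _ = s ^ 6 := by ring
    have hnat : 32 * s * (s - 1) * Nat.choose (2 * d ^ 2 - 2) g ≤ Nat.choose N g :=
      le_trans (Nat.mul_le_mul_right _ hpow) hstep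
    -- move to ℚ
    have hq : (32 * (s : ℚ) * ((s : ℚ) - 1)) * (Nat.choose (2 * d ^ 2 - 2) g : ℚ)
        ≤ (Nat.choose N g : ℚ) := by
      have hcast : ((32 * s * (s - 1) * Nat.choose (2 * d ^ 2 - 2) g : ℕ) : ℚ)
          ≤ ((Nat.choose N g : ℕ) : ℚ) := by exact_mod_cast hnat
      push_cast [Nat.cast_sub (by omega : 1 ≤ s)] at hcast
      linarith
    have hspos : (0 : ℚ) < 32 * (s : ℚ) * ((s : ℚ) - 1) := by
      have : (2 : ℚ) ≤ (s : ℚ) := by exact_mod_cast hs2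
      nlinarith
    rw [← div_eq_mul_inv, le_div_iff₀ hspos]
    linarith [hq, mul_comm ((Nat.choose (2 * d ^ 2 - 2) g : ℚ)) (32 * (s : ℚ) * ((s : ℚ) - 1))]
  -- sum of the tail
  have htail : ∑ s ∈ (ℓ.divisors).erase 1, (Nat.choose (2 * (ℓ / s) ^ 2 - 2) g : ℚ)
      < (Nat.choose N g : ℚ) := by
    calc ∑ s ∈ (ℓ.divisors).erase 1, (Nat.choose (2 * (ℓ / s) ^ 2 - 2) g : ℚ)
        ≤ ∑ s ∈ (ℓ.divisors).erase 1, (Nat.choose N g : ℚ) * (32 * (s : ℚ) * (s - 1))⁻¹ :=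
          Finset.sum_le_sum key
      _ ≤ ∑ s ∈ Finset.Icc 2 ℓ, (Nat.choose N g : ℚ) * (32 * (s : ℚ) * (s - 1))⁻¹ := by
          apply Finset.sum_le_sum_of_subset_of_nonneg
          · intro s hs
            obtain ⟨hs1, hsd⟩ := Finset.mem_erase.mp hs
            obtain ⟨hdvd, -⟩ := Nat.mem_divisors.mp hsd
            have := Nat.le_of_dvd (by omega) hdvd
            have hpos := Nat.pos_of_dvd_of_pos hdvd (by omega)
            exact Finset.mem_Icc.mpr ⟨by omega, this⟩
          · intro s hs _
            have h2 : 2 ≤ s := (Finset.mem_Icc.mp hs).1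
            have h2q : (2 : ℚ) ≤ (s : ℚ) := by exact_mod_cast h2
            have h3 : (0:ℚ) < 32 * (s:ℚ) * ((s:ℚ) - 1) := by nlinarith
            exact mul_nonneg (by positivity) (le_of_lt (inv_pos.mpr h3))
      _ = (Nat.choose N g : ℚ) * (1/32) * ∑ s ∈ Finset.Icc 2 ℓ, ((s : ℚ) * ((s:ℚ) - 1))⁻¹ := by
          rw [Finset.mul_sum]
          apply Finset.sum_congr rfl
          intro s hs
          have : (32 * (s : ℚ) * ((s:ℚ) - 1))⁻¹ = (1/32) * ((s : ℚ) * ((s:ℚ) - 1))⁻¹ := by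
            rw [show (32:ℚ) * (s:ℚ) * ((s:ℚ) - 1) = 32 * ((s:ℚ) * ((s:ℚ) - 1)) from by ring,
              mul_inv]
            norm_num
          rw [this]; ring
      _ ≤ (Nat.choose N g : ℚ) * (1/32) * 1 := by
          have hC32 : (0:ℚ) ≤ (Nat.choose N g : ℚ) * (1/32) := by positivity
          refine mul_le_mul_of_nonneg_left ?_ hC32
          obtain ⟨n, rfl⟩ : ∃ n, ℓ = n + 1 := ⟨ℓ - 1, by omega⟩
          rw [telescope n]
          have h1 : (0:ℚ) ≤ 1 / ((n:ℚ) + 1) := by positivity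
          linarith
      _ < (Nat.choose N g : ℚ) := by
          have : (0:ℚ) < (Nat.choose N g : ℚ) := by exact_mod_cast hNpos
          linarith
  -- convert tail bound to ℤ
  have htailZ : ∑ s ∈ (ℓ.divisors).erase 1, (Nat.choose (2 * (ℓ / s) ^ 2 - 2) g : ℤ)
      < (Nat.choose N g : ℤ) := by
    have : ((∑ s ∈ (ℓ.divisors).erase 1, (Nat.choose (2 * (ℓ / s) ^ 2 - 2) g : ℤ) : ℤ) : ℚ)
        < ((Nat.choose N g : ℤ) : ℚ) := by push_cast; push_cast at htail; exact htail
    exact_mod_cast this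
  -- termwise lower bound of tail
  have hlow : -(∑ s ∈ (ℓ.divisors).erase 1, (Nat.choose (2 * (ℓ / s) ^ 2 - 2) g : ℤ))
      ≤ ∑ s ∈ (ℓ.divisors).erase 1, (μ s : ℤ) * (Nat.choose (2 * (ℓ / s) ^ 2 - 2) g : ℤ) := by
    rw [← Finset.sum_neg_distrib]
    apply Finset.sum_le_sum
    intro s hs
    have hμ : -1 ≤ (μ s : ℤ) := (abs_le.mp (@abs_moebius_le_one s)).1
    have hC : (0 : ℤ) ≤ (Nat.choose (2 * (ℓ / s) ^ 2 - 2) g : ℤ) := Int.natCast_nonneg _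
    calc -(Nat.choose (2 * (ℓ / s) ^ 2 - 2) g : ℤ)
        = (-1) * (Nat.choose (2 * (ℓ / s) ^ 2 - 2) g : ℤ) := by ring
      _ ≤ (μ s : ℤ) * (Nat.choose (2 * (ℓ / s) ^ 2 - 2) g : ℤ) :=
          mul_le_mul_of_nonneg_right hμ hC
  -- conclude
  have : (μ 1 : ℤ) * (Nat.choose (2 * (ℓ / 1) ^ 2 - 2) g : ℤ) = (Nat.choose N g : ℤ) := by
    simp [hμ1, hN]
  rw [this]
  linarith [hlow, htailZ]
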